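/- Let G be a second countable locally compact Hausdorff group with left Haar measure λ, acting properly on a second countable locally compact Hausdorff space Z. Let β be a Radon measure on Z with full support, and let φ : Z → [0,∞) be continuous with q-compact support such that q({φ > 0}) = G\Z, where q is the orbit map. Then the measure ν defined by ν(f) = ∫_G ∫_Z f(g·z) φ(z) dβ(z) dλ(g) for f ∈ C_c(Z) is a well-defined G-invariant Radon measure on Z with support equal to Z. -/

import Mathlib

open MeasureTheory Topology
open scoped NNReal ENNReal

/-- Averaging a fully supported Radon measure `β` against a cut-off function `φ` over a
proper group action using Haar measure yields a well-defined invariant Radon measure with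
full support. -/
theorem stmt8 {G Z : Type*} [Group G] [TopologicalSpace G] [IsTopologicalGroup G]
    [LocallyCompactSpace G] [T2Space G] [SecondCountableTopology G]
    [MeasurableSpace G] [BorelSpace G]
    [TopologicalSpace Z] [LocallyCompactSpace Z] [T2Space Z] [SecondCountableTopology Z]
    [MeasurableSpace Z] [BorelSpace Z]
    [MulAction G Z] [ContinuousSMul G Z]
    (hproper : IsProperMap (fun p : G × Z => (p.1 • p.2, p.2)))
    (lam : Measure G) [lam.IsHaarMeasure]
    (β : Measure Z) [β.Regular]
    (hβfull : ∀ U : Set Z, IsOpen U → U.Nonempty → 0 < β U)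
    (φ : Z → ℝ) (hφc : Continuous φ) (hφ0 : ∀ z, 0 ≤ φ z)
    (hφq : ∀ C : Set (Quotient (MulAction.orbitRel G Z)), IsCompact C →
      IsCompact (tsupport φ ∩ (Quotient.mk (MulAction.orbitRel G Z)) ⁻¹' C))
    (hφsurj : Quotient.mk (MulAction.orbitRel G Z) '' {z | 0 < φ z} = Set.univ) :
    (∀ f : Z → ℝ, Continuous f → HasCompactSupport f →
      Integrable (fun p : G × Z => f (p.1 • p.2) * φ p.2) (lam.prod β)) ∧
    ∃ ν : Measure Z, ν.Regular ∧
      (∀ f : Z → ℝ, Continuous f → HasCompactSupport f →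
        ∫ z, f z ∂ν = ∫ g, ∫ z, f (g • z) * φ z ∂β ∂lam) ∧
      (∀ g : G, Measure.map (fun z => g • z) ν = ν) ∧
      (∀ U : Set Z, IsOpen U → U.Nonempty → 0 < ν U) := by
  classical
  set q : Z → Quotient (MulAction.orbitRel G Z) := Quotient.mk (MulAction.orbitRel G Z) with hqdef
  have hqc : Continuous q := continuous_quot_mk
  have hqsmul : ∀ (g : G) (z : Z), q (g • z) = q z := fun g z =>
    Quotient.sound (MulAction.mem_orbit z g)
  -- the smul map
  have hsc : Continuous (fun p : G × Z => p.1 • p.2) := continuous_smul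
  have hsm : Measurable (fun p : G × Z => p.1 • p.2) := hsc.measurable
  -- q-compactness gives compact "slabs"
  have key : ∀ K : Set Z, IsCompact K →
      IsCompact ((fun p : G × Z => (p.1 • p.2, p.2)) ⁻¹'
        (K ×ˢ (tsupport φ ∩ q ⁻¹' (q '' K)))) := fun K hK =>
    hproper.isCompact_preimage (hK.prod (hφq _ (hK.image hqc)))
  -- compact support of the integrand
  have suppc : ∀ f : Z → ℝ, HasCompactSupport f →
      HasCompactSupport (fun p : G × Z => f (p.1 • p.2) * φ p.2) := by
    intro f hfc
    apply HasCompactSupport.intro (key (tsupport f) hfc)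
    intro p hp
    by_contra hne
    have h1 : f (p.1 • p.2) ≠ 0 := fun h => hne (by simp [h])
    have h2 : φ p.2 ≠ 0 := fun h => hne (by simp [h])
    refine hp ?_
    have hmem : p.1 • p.2 ∈ tsupport f := subset_tsupport f h1
    exact ⟨hmem, subset_tsupport φ h2, ⟨p.1 • p.2, hmem, hqsmul p.1 p.2⟩⟩
  have hcont : ∀ f : Z → ℝ, Continuous f →
      Continuous (fun p : G × Z => f (p.1 • p.2) * φ p.2) := fun f hf =>
    (hf.comp hsc).mul (hφc.comp continuous_snd)
  have int1 : ∀ f : Z → ℝ, Continuous f → HasCompactSupport f →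
      Integrable (fun p : G × Z => f (p.1 • p.2) * φ p.2) (lam.prod β) := fun f hf hfc =>
    (hcont f hf).integrable_of_hasCompactSupport (suppc f hfc)
  refine ⟨int1, ?_⟩
  -- density
  set φn : Z → ℝ≥0 := fun z => Real.toNNReal (φ z) with hφndef
  have hφnm : Measurable φn := (continuous_real_toNNReal.comp hφc).measurable
  have hφ'm : Measurable (fun z => (φn z : ℝ≥0∞)) := hφnm.coe_nnreal_ennreal
  set βφ : Measure Z := β.withDensity (fun z => (φn z : ℝ≥0∞)) with hβφdef
  -- βφ is finite on compacts
  haveI hβφfc : IsFiniteMeasureOnCompacts βφ := by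
    constructor
    intro K hK
    obtain ⟨C, hC⟩ := hK.exists_bound_of_continuousOn hφc.continuousOn
    have : βφ K ≤ ENNReal.ofReal C * β K := by
      rw [hβφdef, withDensity_apply _ hK.measurableSet]
      calc ∫⁻ z in K, (φn z : ℝ≥0∞) ∂β ≤ ∫⁻ _ in K, ENNReal.ofReal C ∂β := by
            refine setLIntegral_mono measurable_const fun z hz => ?_
            have := hC z hz
            rw [hφndef]
            simpa [ENNReal.ofReal] using ENNReal.coe_le_coe.2
              (Real.toNNReal_le_toNNReal ((le_abs_self _).trans (hC z hz)))
        _ = ENNReal.ofReal C * β K := by rw [setLIntegral_const]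
    exact this.trans_lt (ENNReal.mul_lt_top ENNReal.ofReal_lt_top hK.measure_lt_top)
  -- βφ vanishes outside tsupport φ
  have hβφsupp : βφ ((tsupport φ)ᶜ) = 0 := by
    rw [hβφdef, withDensity_apply _ (isClosed_tsupport φ).measurableSet.compl]
    rw [setLIntegral_congr_fun (isClosed_tsupport φ).measurableSet.compl
      (fun z hz => ?_), lintegral_zero]
    have : φ z = 0 := image_eq_zero_of_notMem_tsupport hz
    simp [hφndef, this]
  haveI : SigmaFinite βφ := inferInstance
  -- the measure ν
  set ν : Measure Z := (lam.prod βφ).map (fun p : G × Z => p.1 • p.2) with hνdef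
  -- prod with density identity
  have hprodwd : lam.prod βφ = (lam.prod β).withDensity (fun p => (φn p.2 : ℝ≥0∞)) := by
    refine Measure.prod_eq fun s t hs ht => ?_
    rw [withDensity_apply _ (hs.prod ht)]
    rw [← Measure.prod_restrict s t, lintegral_prod _ ((show Measurable fun p : G × Z => (φn p.2 : ℝ≥0∞) from hφ'm.comp measurable_snd)).aemeasurable]
    simp only [lintegral_const, Measure.restrict_apply MeasurableSet.univ, Set.univ_inter]
    rw [hβφdef, withDensity_apply _ ht]
    ring
  -- ν finite on compacts
  haveI hνfc : IsFiniteMeasureOnCompacts ν := by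
    constructor
    intro K hK
    rw [hνdef, Measure.map_apply hsm hK.measurableSet]
    set S : Set Z := tsupport φ ∩ q ⁻¹' (q '' K) with hSdef
    set C : Set (G × Z) := (fun p : G × Z => (p.1 • p.2, p.2)) ⁻¹' (K ×ˢ S) with hCdef
    have hCc : IsCompact C := key K hK
    have hsub : (fun p : G × Z => p.1 • p.2) ⁻¹' K ⊆ C ∪ (Set.univ ×ˢ (tsupport φ)ᶜ) := by
      intro p hp
      by_cases h : p.2 ∈ tsupport φ
      · left
        exact ⟨hp, h, ⟨p.1 • p.2, hp, hqsmul p.1 p.2⟩⟩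
      · right; exact ⟨trivial, h⟩
    calc (lam.prod βφ) ((fun p : G × Z => p.1 • p.2) ⁻¹' K)
        ≤ (lam.prod βφ) C + (lam.prod βφ) (Set.univ ×ˢ (tsupport φ)ᶜ) :=
          (measure_mono hsub).trans (measure_union_le _ _)
      _ < ⊤ := by
          rw [Measure.prod_prod, hβφsupp, mul_zero, add_zero]
          exact hCc.measure_lt_top
  refine ⟨ν, inferInstance, ?_, ?_, ?_⟩
  · -- integral formula
    intro f hf hfc
    have hint : Integrable (fun p : G × Z => φn p.2 • f (p.1 • p.2)) (lam.prod β) := by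
      refine (int1 f hf hfc).congr (Filter.Eventually.of_forall fun p => ?_)
      simp [hφndef, NNReal.smul_def, Real.coe_toNNReal _ (hφ0 p.2), mul_comm]
    calc ∫ z, f z ∂ν = ∫ p : G × Z, f (p.1 • p.2) ∂(lam.prod βφ) := by
          rw [hνdef, integral_map hsm.aemeasurable hf.aestronglyMeasurable]
      _ = ∫ p : G × Z, φn p.2 • f (p.1 • p.2) ∂(lam.prod β) := by
          rw [hprodwd, integral_withDensity_eq_integral_smul (show Measurable fun p : G × Z => φn p.2 from hφnm.comp measurable_snd)]
      _ = ∫ g, ∫ z, φn z • f (g • z) ∂β ∂lam := by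
          rw [MeasureTheory.integral_prod _ hint]
      _ = ∫ g, ∫ z, f (g • z) * φ z ∂β ∂lam := by
          refine integral_congr_ae (Filter.Eventually.of_forall fun g => ?_)
          refine integral_congr_ae (Filter.Eventually.of_forall fun z => ?_)
          simp [hφndef, NNReal.smul_def, Real.coe_toNNReal _ (hφ0 z), mul_comm]
  · -- invariance
    intro g
    have hmapm : Measurable (fun z : Z => g • z) := (continuous_const_smul g).measurable
    rw [hνdef, Measure.map_map hmapm hsm]
    have hcomp : (fun z : Z => g • z) ∘ (fun p : G × Z => p.1 • p.2)
        = (fun p : G × Z => p.1 • p.2) ∘ (Prod.map (fun h : G => g * h) id) := by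
      funext p; simp [mul_smul, Prod.map]
    rw [hcomp, ← Measure.map_map hsm ((show Measurable (fun h : G => g * h) from measurable_id.const_mul g).prodMap measurable_id)]
    rw [← Measure.map_prod_map _ _ (show Measurable (fun h : G => g * h) from measurable_id.const_mul g) measurable_id,
      Measure.map_id, MeasureTheory.map_mul_left_eq_self]
  · -- full support
    intro U hU hUne
    obtain ⟨z₀, hz₀⟩ := hUne
    have : q z₀ ∈ q '' {z | 0 < φ z} := by rw [hφsurj]; trivial
    obtain ⟨w, hw, hww⟩ := this
    have hrel : MulAction.orbitRel G Z w z₀ := Quotient.exact hww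
    obtain ⟨g, hg⟩ : ∃ g : G, g • z₀ = w := hrel
    have hmem : (g⁻¹, w) ∈ (fun p : G × Z => p.1 • p.2) ⁻¹' U := by
      simp only [Set.mem_preimage, ← hg, inv_smul_smul]; exact hz₀
    have hopen : IsOpen ((fun p : G × Z => p.1 • p.2) ⁻¹' U) := hU.preimage hsc
    obtain ⟨V, W, hV, hW, hgV, hwW, hVW⟩ := isOpen_prod_iff.1 hopen _ _ hmem
    set W' : Set Z := W ∩ {z | 0 < φ z} with hW'def
    have hW'o : IsOpen W' := hW.inter (isOpen_lt continuous_const hφc)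
    have hwW' : w ∈ W' := ⟨hwW, hw⟩
    have hsub : V ×ˢ W' ⊆ (fun p : G × Z => p.1 • p.2) ⁻¹' U := fun p hp =>
      hVW ⟨hp.1, hp.2.1⟩
    have hν : ν U = (lam.prod βφ) ((fun p : G × Z => p.1 • p.2) ⁻¹' U) := by
      rw [hνdef, Measure.map_apply hsm hU.measurableSet]
    rw [hν]
    refine lt_of_lt_of_le ?_ ((measure_mono hsub).trans' le_rfl)
    rw [Measure.prod_prod]
    have hlamV : 0 < lam V := hV.measure_pos lam ⟨g⁻¹, hgV⟩
    have hβφW' : 0 < βφ W' := by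
      rw [hβφdef, withDensity_apply _ hW'o.measurableSet]
      rcases eq_zero_or_pos (∫⁻ z in W', (φn z : ℝ≥0∞) ∂β) with h | h
      · exfalso
        rw [lintegral_eq_zero_iff hφ'm] at h
        have h2 : ∀ᵐ z ∂β, z ∈ W' → (φn z : ℝ≥0∞) = 0 :=
          (ae_restrict_iff' hW'o.measurableSet).1 h
        have h3 : β W' = 0 := by
          refine measure_mono_null (fun z hz => ?_) (ae_iff.1 h2)
          intro H
          exact absurd (H hz) (ne_of_gt (by
            exact_mod_cast ENNReal.coe_pos.2 (Real.toNNReal_pos.2 hz.2)))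
        exact absurd h3 (hβfull W' hW'o ⟨w, hwW'⟩).ne'
      · exact h
    exact ENNReal.mul_pos hlamV.ne' hβφW'.ne'
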